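/- Let m be an odd positive integer and let a(X), b(X) ∈ J_m, where J_m is the ideal of R_m generated by X − 1. Then dim C_{a,b} ≤ m − 1; moreover, dim C_{a,b} < m − 1 if and only if there exists an irreducible factor p(X) of X^{m−1} + X^{m−2} + ⋯ + X + 1 in (Z/2)[X] such that p(X) divides a(X) and p(X) divides b(X). -/

import Mathlib

open Polynomial

noncomputable section

/-- The polynomial `X^m - 1` over `Z/2`. -/
def fm (m : ℕ) : Polynomial (ZMod 2) := X ^ m - 1

/-- The polynomial `X^m - 1` over `Z/4`. -/
def fm4 (m : ℕ) : Polynomial (ZMod 4) := X ^ m - 1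

/-- `R_m = (Z/2)[X]/⟨X^m - 1⟩`. -/
abbrev R2 (m : ℕ) : Type := Polynomial (ZMod 2) ⧸ Ideal.span {fm m}

/-- `R'_m = (Z/4)[X]/⟨X^m - 1⟩`. -/
abbrev R4 (m : ℕ) : Type := Polynomial (ZMod 4) ⧸ Ideal.span {fm4 m}

def mk2 (m : ℕ) : Polynomial (ZMod 2) →+* R2 m := Ideal.Quotient.mk _

def mk4 (m : ℕ) : Polynomial (ZMod 4) →+* R4 m := Ideal.Quotient.mk _

/-- The canonical representative (of degree `< m`) of an element of `R2 m`. -/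
def rep2 (m : ℕ) (r : R2 m) : Polynomial (ZMod 2) :=
  (Function.surjInv (Ideal.Quotient.mk_surjective (I := Ideal.span {fm m})) r) %ₘ fm m

/-- The canonical representative (of degree `< m`) of an element of `R4 m`. -/
def rep4 (m : ℕ) (r : R4 m) : Polynomial (ZMod 4) :=
  (Function.surjInv (Ideal.Quotient.mk_surjective (I := Ideal.span {fm4 m})) r) %ₘ fm4 m

/-- Coefficientwise doubling map `(Z/2)[X] → (Z/4)[X]`, `a ↦ 2a` on each coefficient. -/
def polyDbl (p : Polynomial (ZMod 2)) : Polynomial (ZMod 4) :=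
  ∑ i ∈ p.support, Polynomial.C (2 * ((p.coeff i).val : ZMod 4)) * X ^ i

/-- The additive embedding `R_m → R'_m`, `f ↦ 2f`. -/
def iota (m : ℕ) (r : R2 m) : R4 m := mk4 m (polyDbl (rep2 m r))

/-- Hamming weight of an element of `R_m` (of its coefficient vector). -/
def wt2 (m : ℕ) (r : R2 m) : ℕ := (rep2 m r).support.card

/-- Lee weight of an element of `Z/4`. -/
def lee (x : ZMod 4) : ℕ := min x.val (4 - x.val)

/-- Lee weight of an element of `R'_m` (of its coefficient vector). -/
def wtLee (m : ℕ) (r : R4 m) : ℕ := ∑ i ∈ (rep4 m r).support, lee ((rep4 m r).coeff i)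

/-- The augmentation ideal `J_m = ⟨X - 1⟩` of `R_m`. -/
def Jm (m : ℕ) : Ideal (R2 m) := Ideal.span {mk2 m (X - 1)}

/-- The `Z2Z4`-additive cyclic code `C_{a,b} = {(f·a, 2(f·b)) : f ∈ R_m}`. -/
def Cab (m : ℕ) (a b : R2 m) : Set (R2 m × R4 m) :=
  {w | ∃ f : R2 m, w = (f * a, iota m (f * b))}

/-- Dimension of `C_{a,b}` as a vector space over `Z/2`, i.e. `log₂ |C_{a,b}|`. -/
def dimCab (m : ℕ) (a b : R2 m) : ℕ := Nat.log 2 (Nat.card (Cab m a b))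

/-- `(X^m - 1)/(X - 1) = X^{m-1} + ⋯ + X + 1` over `Z/2`. -/
def geomPoly (m : ℕ) : Polynomial (ZMod 2) := ∑ i ∈ Finset.range m, X ^ i

/-- `ℓ_m`: minimal degree of the irreducible factors of `(X^m-1)/(X-1)` in `(Z/2)[X]`. -/
def ell (m : ℕ) : ℕ :=
  sInf {d | ∃ p : Polynomial (ZMod 2), Irreducible p ∧ p ∣ geomPoly m ∧ p.natDegree = d}

/-- The binary entropy function `H(x) = -x·log₂x - (1-x)·log₂(1-x)`. -/
def Hent (x : ℝ) : ℝ := -(x * Real.logb 2 x) - (1 - x) * Real.logb 2 (1 - x)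

namespace S3Aux

lemma zmod2_eq_one {u : ZMod 2} (h : u ≠ 0) : u = 1 := by revert u; decide

lemma fm_monic {m : ℕ} (hm : 0 < m) : (fm m).Monic := by
  have := monic_X_pow_sub_C (1 : ZMod 2) hm.ne'
  simpa [fm] using this

instance : Nontrivial (ZMod 4) := ⟨0, 1, by decide⟩

lemma fm4_monic {m : ℕ} (hm : 0 < m) : (fm4 m).Monic := by
  have := monic_X_pow_sub_C (1 : ZMod 4) hm.ne'
  simpa [fm4] using this

lemma fm_natDegree (m : ℕ) : (fm m).natDegree = m := by
  have : fm m = X ^ m - C 1 := by simp [fm]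
  rw [this, natDegree_X_pow_sub_C]

lemma fm_degree {m : ℕ} (hm : 0 < m) : (fm m).degree = m := by
  have : fm m = X ^ m - C 1 := by simp [fm]
  rw [this, degree_X_pow_sub_C hm]

lemma fm4_degree {m : ℕ} (hm : 0 < m) : (fm4 m).degree = m := by
  have : fm4 m = X ^ m - C 1 := by simp [fm4]
  rw [this, degree_X_pow_sub_C hm]

lemma mk2_eq_zero_iff {m : ℕ} {p : Polynomial (ZMod 2)} : mk2 m p = 0 ↔ fm m ∣ p := by
  rw [mk2, Ideal.Quotient.eq_zero_iff_mem, Ideal.mem_span_singleton]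

lemma mk2_eq_iff {m : ℕ} {p q : Polynomial (ZMod 2)} :
    mk2 m p = mk2 m q ↔ fm m ∣ p - q := by
  rw [mk2, Ideal.Quotient.mk_eq_mk_iff_sub_mem, Ideal.mem_span_singleton]

lemma mk2_modByMonic {m : ℕ} (hm : 0 < m) (p : Polynomial (ZMod 2)) :
    mk2 m (p %ₘ fm m) = mk2 m p := by
  have h0 : mk2 m (fm m) = 0 :=
    Ideal.Quotient.eq_zero_iff_mem.mpr (Ideal.mem_span_singleton_self _)
  rw [modByMonic_eq_sub_mul_div _ (fm m), map_sub, map_mul, h0, zero_mul, sub_zero]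

lemma mk2_rep2 {m : ℕ} (hm : 0 < m) (r : R2 m) : mk2 m (rep2 m r) = r := by
  rw [rep2, mk2_modByMonic hm]
  exact Function.surjInv_eq _ r

lemma rep2_degree_lt {m : ℕ} (hm : 0 < m) (r : R2 m) : (rep2 m r).degree < (m : ℕ) := by
  rw [rep2, ← fm_degree hm]
  exact degree_modByMonic_lt _ (fm_monic hm)

lemma polyDbl_coeff (p : Polynomial (ZMod 2)) (i : ℕ) :
    (polyDbl p).coeff i = 2 * ((p.coeff i).val : ZMod 4) := by
  rw [polyDbl, finset_sum_coeff]
  simp only [coeff_C_mul, coeff_X_pow, mul_ite, mul_one, mul_zero]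
  rw [Finset.sum_ite_eq p.support i (fun j => 2 * ((p.coeff j).val : ZMod 4))]
  by_cases h : i ∈ p.support
  · simp [h]
  · simp [h, Polynomial.notMem_support_iff.mp h]

lemma polyDbl_inj {p q : Polynomial (ZMod 2)} (h : polyDbl p = polyDbl q) : p = q := by
  ext i
  have := congrArg (fun r => Polynomial.coeff r i) h
  simp only [polyDbl_coeff] at this
  have key : ∀ u v : ZMod 2, 2 * ((u.val : ZMod 4)) = 2 * ((v.val : ZMod 4)) → u = v := by decide
  exact key _ _ this

lemma polyDbl_degree_lt {m : ℕ} {p : Polynomial (ZMod 2)} (h : p.degree < (m : ℕ)) :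
    (polyDbl p).degree < (m : ℕ) := by
  rw [Polynomial.degree_lt_iff_coeff_zero] at h ⊢
  intro k hk
  rw [polyDbl_coeff, h k hk]
  simp

lemma iota_injective {m : ℕ} (hm : 0 < m) : Function.Injective (iota m) := by
  intro r s h
  rw [iota, iota] at h
  have hmem : fm4 m ∣ polyDbl (rep2 m r) - polyDbl (rep2 m s) := by
    rw [← Ideal.mem_span_singleton]
    exact (Ideal.Quotient.mk_eq_mk_iff_sub_mem _ _).mp h
  have heq : polyDbl (rep2 m r) = polyDbl (rep2 m s) := by
    by_contra hne
    have hne' : polyDbl (rep2 m r) - polyDbl (rep2 m s) ≠ 0 := sub_ne_zero.mpr hne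
    obtain ⟨t, ht⟩ := hmem
    have ht0 : t ≠ 0 := by rintro rfl; rw [mul_zero] at ht; exact hne' ht
    rw [mul_comm] at ht
    have hdm : (t * fm4 m).degree = t.degree + (fm4 m).degree := (fm4_monic hm).degree_mul
    have hge : (m : WithBot ℕ) ≤ (polyDbl (rep2 m r) - polyDbl (rep2 m s)).degree := by
      rw [ht, hdm, fm4_degree hm]
      have h0t : (0 : WithBot ℕ) ≤ t.degree := by
        simpa using (Polynomial.zero_le_degree_iff).mpr ht0
      exact le_add_of_nonneg_left h0t
    have hd : (polyDbl (rep2 m r) - polyDbl (rep2 m s)).degree < (m : ℕ) :=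
      lt_of_le_of_lt (degree_sub_le _ _)
        (max_lt (polyDbl_degree_lt (rep2_degree_lt hm r))
          (polyDbl_degree_lt (rep2_degree_lt hm s)))
    exact absurd (hge.trans_lt hd) (lt_irrefl _)
  have := polyDbl_inj heq
  rw [← mk2_rep2 hm r, ← mk2_rep2 hm s, this]

lemma geom_mul_eq (m : ℕ) : geomPoly m * (X - 1) = fm m := by
  rw [geomPoly, fm]
  exact geom_sum_mul X m

lemma X_sub_one_ne_zero : (X - 1 : Polynomial (ZMod 2)) ≠ 0 := by
  simpa using Polynomial.X_sub_C_ne_zero (1 : ZMod 2)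

lemma natDegree_X_sub_one : (X - 1 : Polynomial (ZMod 2)).natDegree = 1 := by
  simpa using Polynomial.natDegree_X_sub_C (x := (1 : ZMod 2))

lemma geomPoly_ne_zero {m : ℕ} (hm : 0 < m) : geomPoly m ≠ 0 := by
  intro h
  apply (fm_monic hm).ne_zero
  rw [← geom_mul_eq, h, zero_mul]

lemma geomPoly_natDegree {m : ℕ} (hm : 0 < m) : (geomPoly m).natDegree = m - 1 := by
  have h := natDegree_mul (geomPoly_ne_zero hm) X_sub_one_ne_zero
  rw [geom_mul_eq, fm_natDegree, natDegree_X_sub_one] at h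
  omega

lemma geomPoly_eval_one {m : ℕ} (hm : Odd m) : (geomPoly m).eval 1 = 1 := by
  rw [geomPoly, eval_finset_sum]
  simp only [eval_pow, eval_X, one_pow, Finset.sum_const, Finset.card_range, nsmul_eq_mul,
    mul_one]
  rw [← ZMod.natCast_mod m 2, Nat.odd_iff.mp hm, Nat.cast_one]

lemma geomPoly_eval_zero {m : ℕ} (hm : 0 < m) : (geomPoly m).eval 0 = 1 := by
  rw [geomPoly, eval_finset_sum]
  simp only [eval_pow, eval_X]
  rw [Finset.sum_eq_single 0]
  · simp
  · intro i _ hi; exact zero_pow hi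
  · intro h; exact absurd (Finset.mem_range.mpr hm) h

lemma two_le_natDegree_of_irred_dvd {m : ℕ} (hm : Odd m) (hmpos : 0 < m)
    {p : Polynomial (ZMod 2)} (hp : Irreducible p) (hpg : p ∣ geomPoly m) :
    2 ≤ p.natDegree := by
  have h0 : p.natDegree ≠ 0 := by
    intro h
    obtain ⟨c, rfl⟩ := natDegree_eq_zero.mp h
    rcases eq_or_ne c 0 with rfl | hc
    · rw [map_zero] at hp; exact not_irreducible_zero hp
    · exact hp.not_isUnit (isUnit_C.mpr (isUnit_iff_ne_zero.mpr hc))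
  have h1 : p.natDegree ≠ 1 := by
    intro h
    have hform := eq_X_add_C_of_natDegree_le_one h.le
    have hlc : p.coeff 1 ≠ 0 := by
      intro hz
      rw [hform, hz, map_zero, zero_mul, zero_add] at h
      simp at h
    have hlc1 : p.coeff 1 = 1 := zmod2_eq_one hlc
    obtain ⟨t, ht⟩ := hpg
    rcases eq_or_ne (p.coeff 0) 0 with h0' | h1'
    · have : (geomPoly m).eval 0 = 0 := by
        rw [ht, eval_mul, hform, h0', hlc1]
        simp
      rw [geomPoly_eval_zero hmpos] at this
      exact one_ne_zero this
    · have h1'' : p.coeff 0 = 1 := zmod2_eq_one h1'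
      have hpe : p.eval 1 = 0 := by
        rw [hform, h1'', hlc1]
        simp only [eval_add, eval_mul, eval_C, eval_X, one_mul, mul_one]
        decide
      have : (geomPoly m).eval 1 = 0 := by rw [ht, eval_mul, hpe, zero_mul]
      rw [geomPoly_eval_one hm] at this
      exact one_ne_zero this
  omega

lemma X_sub_one_dvd_rep {m : ℕ} (hm : 0 < m) {a : R2 m} (ha : a ∈ Jm m) :
    (X - 1) ∣ rep2 m a := by
  rw [Jm] at ha
  obtain ⟨c, hc⟩ := Ideal.mem_span_singleton'.mp ha
  obtain ⟨c', rfl⟩ := Ideal.Quotient.mk_surjective c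
  have hc2 : mk2 m (c' * (X - 1)) = a := by
    rw [map_mul]; exact hc
  have h2 : fm m ∣ rep2 m a - c' * (X - 1) := by
    rw [← mk2_eq_iff, mk2_rep2 hm, hc2]
  obtain ⟨k, hk⟩ := h2
  have : rep2 m a = c' * (X - 1) + (geomPoly m * (X - 1)) * k := by
    rw [geom_mul_eq, ← hk]; ring
  rw [this]
  exact dvd_add (Dvd.intro_left _ rfl) ⟨geomPoly m * k, by ring⟩


lemma card_submodule {V : Type} [AddCommGroup V] [Module (ZMod 2) V]
    [Module.Finite (ZMod 2) V] (W : Submodule (ZMod 2) V) :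
    Nat.card W = 2 ^ Module.finrank (ZMod 2) W := by
  haveI : Finite V := Module.finite_of_finite (ZMod 2)
  haveI : Fintype W := Fintype.ofFinite _
  rw [Nat.card_eq_fintype_card, Module.card_eq_pow_finrank (K := ZMod 2), ZMod.card]

end S3Aux

set_option maxHeartbeats 2000000 in
/-- For `a, b ∈ J_m`: `dim C_{a,b} ≤ m - 1`, and `dim C_{a,b} < m - 1`
iff some irreducible factor `p` of `X^{m-1} + ⋯ + X + 1` over `Z/2` divides both `a` and `b`
(as polynomial representatives). -/
theorem statement3 (m : ℕ) (hm : Odd m) (hmpos : 0 < m)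
    (a b : R2 m) (ha : a ∈ Jm m) (hb : b ∈ Jm m) :
    dimCab m a b ≤ m - 1 ∧
    (dimCab m a b < m - 1 ↔ ∃ p : Polynomial (ZMod 2),
      Irreducible p ∧ p ∣ geomPoly m ∧ p ∣ rep2 m a ∧ p ∣ rep2 m b) := by
  classical
  have hne : fm m ≠ 0 := (S3Aux.fm_monic hmpos).ne_zero
  haveI : Module.Finite (ZMod 2) (R2 m) :=
    Module.Finite.of_basis (AdjoinRoot.powerBasis hne).basis
  haveI : Finite (R2 m) := Module.finite_of_finite (ZMod 2)
  have hrank : Module.finrank (ZMod 2) (R2 m) = m := by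
    have h := (AdjoinRoot.powerBasis hne).finrank
    rw [AdjoinRoot.powerBasis_dim, S3Aux.fm_natDegree] at h
    exact h
  set Φ : R2 m →ₗ[ZMod 2] R2 m × R2 m :=
    (LinearMap.mulRight (ZMod 2) a).prod (LinearMap.mulRight (ZMod 2) b) with hPhidef
  have hPhi : ∀ f : R2 m, Φ f = (f * a, f * b) := fun f => rfl
  have hker_mk : ∀ F : Polynomial (ZMod 2),
      (mk2 m F ∈ LinearMap.ker Φ ↔ fm m ∣ F * rep2 m a ∧ fm m ∣ F * rep2 m b) := by
    intro F
    rw [LinearMap.mem_ker, hPhi (mk2 m F), Prod.mk_eq_zero]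
    have h1 : mk2 m F * a = mk2 m (F * rep2 m a) := by
      rw [map_mul, S3Aux.mk2_rep2 hmpos]
    have h2 : mk2 m F * b = mk2 m (F * rep2 m b) := by
      rw [map_mul, S3Aux.mk2_rep2 hmpos]
    rw [h1, h2, S3Aux.mk2_eq_zero_iff, S3Aux.mk2_eq_zero_iff]
  have hCab : Cab m a b = (fun w : R2 m × R2 m => (w.1, iota m w.2)) ''
      ((LinearMap.range Φ : Submodule (ZMod 2) (R2 m × R2 m)) : Set (R2 m × R2 m)) := by
    ext w
    simp only [Cab, Set.mem_setOf_eq, Set.mem_image, SetLike.mem_coe, LinearMap.mem_range]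
    constructor
    · rintro ⟨f, rfl⟩
      exact ⟨(f * a, f * b), ⟨f, rfl⟩, rfl⟩
    · rintro ⟨x, ⟨f, rfl⟩, rfl⟩
      exact ⟨f, rfl⟩
  have hiotainj := S3Aux.iota_injective (m := m) hmpos
  have hinj : Function.Injective (fun w : R2 m × R2 m => (w.1, iota m w.2)) := by
    rintro ⟨u1, u2⟩ ⟨v1, v2⟩ h
    simp only [Prod.mk.injEq] at h
    exact Prod.ext h.1 (hiotainj h.2)
  have hcardCab : Nat.card (Cab m a b) = 2 ^ Module.finrank (ZMod 2) (LinearMap.range Φ) := by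
    rw [hCab, Nat.card_image_of_injective hinj, ← S3Aux.card_submodule (LinearMap.range Φ)]
    rfl
  set k := Module.finrank (ZMod 2) (LinearMap.ker Φ) with hk
  have hsum := LinearMap.finrank_range_add_finrank_ker Φ
  rw [hrank] at hsum
  have hdim : dimCab m a b = m - k := by
    rw [dimCab, hcardCab, Nat.log_pow (by norm_num : (1:ℕ) < 2)]
    omega
  have hkm : k ≤ m := by omega
  -- the standard kernel element mk2 (geomPoly m)
  obtain ⟨A1, hA1e⟩ := S3Aux.X_sub_one_dvd_rep hmpos ha
  obtain ⟨B1, hB1e⟩ := S3Aux.X_sub_one_dvd_rep hmpos hb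
  have hgker : mk2 m (geomPoly m) ∈ LinearMap.ker Φ := by
    rw [hker_mk]
    constructor
    · exact ⟨A1, by rw [hA1e, ← S3Aux.geom_mul_eq]; ring⟩
    · exact ⟨B1, by rw [hB1e, ← S3Aux.geom_mul_eq]; ring⟩
  have hgne : mk2 m (geomPoly m) ≠ 0 := by
    rw [Ne, S3Aux.mk2_eq_zero_iff]
    intro hdvd
    have := Polynomial.natDegree_le_of_dvd hdvd (S3Aux.geomPoly_ne_zero hmpos)
    rw [S3Aux.fm_natDegree, S3Aux.geomPoly_natDegree hmpos] at this
    omega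
  have hk1 : 1 ≤ k := by
    by_contra hcon
    have hk0 : k = 0 := by omega
    have hbot : LinearMap.ker Φ = ⊥ := Submodule.finrank_eq_zero.mp hk0
    rw [hbot, Submodule.mem_bot] at hgker
    exact hgne hgker
  refine ⟨by rw [hdim]; omega, ?_, ?_⟩
  · -- dim < m - 1 → ∃ p
    intro hlt
    rw [hdim] at hlt
    have hk2 : 2 ≤ k := by omega
    have hex : ∃ f, f ∈ LinearMap.ker Φ ∧ f ≠ 0 ∧ f ≠ mk2 m (geomPoly m) := by
      by_contra hcon
      push_neg at hcon
      have hsub : (LinearMap.ker Φ : Set (R2 m)) ⊆ {0, mk2 m (geomPoly m)} := by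
        intro f hf
        rcases eq_or_ne f 0 with rfl | hf0
        · exact Set.mem_insert _ _
        · have := hcon f hf hf0
          simp [this]
      have h1 := Set.ncard_le_ncard hsub (Set.toFinite _)
      have h2 : ({0, mk2 m (geomPoly m)} : Set (R2 m)).ncard ≤ 2 := by
        apply (Set.ncard_insert_le _ _).trans
        simp
      have h3 : (LinearMap.ker Φ : Set (R2 m)).ncard = 2 ^ k := by
        rw [← Nat.card_coe_set_eq]
        exact S3Aux.card_submodule _
      have h4 : (4:ℕ) ≤ 2 ^ k := by
        calc (4:ℕ) = 2 ^ 2 := rfl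
        _ ≤ 2 ^ k := Nat.pow_le_pow_right (by norm_num) hk2
      omega
    obtain ⟨f, hfk, hf0, hfg⟩ := hex
    obtain ⟨F, hF⟩ : ∃ F, F = rep2 m f := ⟨_, rfl⟩
    have hFmk : mk2 m F = f := by rw [hF]; exact S3Aux.mk2_rep2 hmpos f
    have hker' := (hker_mk F).mp (by rw [hFmk]; exact hfk)
    have hFA : fm m ∣ F * rep2 m a := hker'.1
    have hFB : fm m ∣ F * rep2 m b := hker'.2
    have hF0 : F ≠ 0 := by
      intro h
      rw [h, map_zero] at hFmk
      exact hf0 hFmk.symm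
    have hFdeg : F.natDegree < m :=
      (Polynomial.natDegree_lt_iff_degree_lt hF0).mpr (hF ▸ S3Aux.rep2_degree_lt hmpos f)
    have hFg : F ≠ geomPoly m := by
      intro h
      rw [h] at hFmk
      exact hfg hFmk.symm
    obtain ⟨d, hd⟩ : ∃ d, d = gcd (fm m) F := ⟨_, rfl⟩
    have hd0 : d ≠ 0 := by rw [hd]; exact gcd_ne_zero_of_left hne
    obtain ⟨e, hde⟩ : d ∣ fm m := hd ▸ gcd_dvd_left _ _
    obtain ⟨F1, hdF1⟩ : d ∣ F := hd ▸ gcd_dvd_right _ _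
    have he0 : e ≠ 0 := by rintro rfl; rw [mul_zero] at hde; exact hne hde
    have hF10 : F1 ≠ 0 := by rintro rfl; rw [mul_zero] at hdF1; exact hF0 hdF1
    have hcop : IsCoprime e F1 := by
      have h1 : fm m / d = e := (EuclideanDomain.eq_div_of_mul_eq_right hd0 hde.symm).symm
      have h2 : F / d = F1 := (EuclideanDomain.eq_div_of_mul_eq_right hd0 hdF1.symm).symm
      have h3 := isCoprime_div_gcd_div_gcd (p := fm m) (q := F) hF0
      rw [← hd, h1, h2] at h3
      exact h3
    have heA : e ∣ rep2 m a := by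
      have h1 : d * e ∣ d * (F1 * rep2 m a) := by
        rw [← hde, ← mul_assoc, ← hdF1]; exact hFA
      exact hcop.dvd_of_dvd_mul_left ((mul_dvd_mul_iff_left hd0).mp h1)
    have heB : e ∣ rep2 m b := by
      have h1 : d * e ∣ d * (F1 * rep2 m b) := by
        rw [← hde, ← mul_assoc, ← hdF1]; exact hFB
      exact hcop.dvd_of_dvd_mul_left ((mul_dvd_mul_iff_left hd0).mp h1)
    have heu : ¬ IsUnit e := by
      intro hu
      have hdvd : fm m ∣ F := by
        rw [hde, hdF1]
        exact mul_dvd_mul_left d hu.dvd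
      have := Polynomial.natDegree_le_of_dvd hdvd hF0
      rw [S3Aux.fm_natDegree] at this
      omega
    by_cases hug : IsUnit (gcd e (geomPoly m))
    · exfalso
      have hcop2 : IsCoprime e (geomPoly m) := (gcd_isUnit_iff _ _).mp hug
      have hedvd : e ∣ geomPoly m * (X - 1) := by
        rw [S3Aux.geom_mul_eq]; exact ⟨d, by rw [hde]; ring⟩
      have heX : e ∣ (X - 1) := hcop2.dvd_of_dvd_mul_left hedvd
      obtain ⟨w, hw⟩ := heX
      have hw0 : w ≠ 0 := by
        rintro rfl; rw [mul_zero] at hw; exact S3Aux.X_sub_one_ne_zero hw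
      have hdeg1 : e.natDegree + w.natDegree = 1 := by
        have h := Polynomial.natDegree_mul he0 hw0
        rw [← hw, S3Aux.natDegree_X_sub_one] at h
        omega
      have hedeg : e.natDegree ≠ 0 := by
        intro h
        obtain ⟨c, hc⟩ := Polynomial.natDegree_eq_zero.mp h
        have hc0 : c ≠ 0 := by rintro rfl; rw [map_zero] at hc; exact he0 hc.symm
        exact heu (hc ▸ Polynomial.isUnit_C.mpr (isUnit_iff_ne_zero.mpr hc0))
      have hwdeg : w.natDegree = 0 := by omega
      obtain ⟨c, hc⟩ := Polynomial.natDegree_eq_zero.mp hwdeg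
      have hc0 : c ≠ 0 := by rintro rfl; rw [map_zero] at hc; exact hw0 hc.symm
      have hw1 : w = 1 := by rw [← hc, S3Aux.zmod2_eq_one hc0, map_one]
      rw [hw1, mul_one] at hw
      have hdg : geomPoly m = d := by
        have h1 : geomPoly m * (X - 1) = d * (X - 1) := by
          rw [S3Aux.geom_mul_eq, hde, hw]
        exact mul_right_cancel₀ S3Aux.X_sub_one_ne_zero h1
      have hgF : geomPoly m ∣ F := by rw [hdg]; exact ⟨F1, hdF1⟩
      obtain ⟨t, ht⟩ := hgF
      have ht0 : t ≠ 0 := by rintro rfl; rw [mul_zero] at ht; exact hF0 ht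
      have hdeg2 := Polynomial.natDegree_mul (S3Aux.geomPoly_ne_zero hmpos) ht0
      rw [← ht, S3Aux.geomPoly_natDegree hmpos] at hdeg2
      have htd : t.natDegree = 0 := by omega
      obtain ⟨c2, hc2⟩ := Polynomial.natDegree_eq_zero.mp htd
      have hc20 : c2 ≠ 0 := by rintro rfl; rw [map_zero] at hc2; exact ht0 hc2.symm
      rw [← hc2, S3Aux.zmod2_eq_one hc20, map_one, mul_one] at ht
      exact hFg ht
    · obtain ⟨p, hp, hpdvd⟩ := WfDvdMonoid.exists_irreducible_factor hug
        (gcd_ne_zero_of_left he0)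
      exact ⟨p, hp, hpdvd.trans (gcd_dvd_right _ _),
        (hpdvd.trans (gcd_dvd_left _ _)).trans heA,
        (hpdvd.trans (gcd_dvd_left _ _)).trans heB⟩
  · -- ∃ p → dim < m - 1
    rintro ⟨p, hp, hpg, hpA, hpB⟩
    obtain ⟨c, hc⟩ := hpg
    obtain ⟨A2, hA2⟩ := hpA
    obtain ⟨B2, hB2⟩ := hpB
    have hdp : 2 ≤ p.natDegree := S3Aux.two_le_natDegree_of_irred_dvd hm hmpos hp ⟨c, hc⟩
    have hp0 : p ≠ 0 := hp.ne_zero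
    have hc0 : c ≠ 0 := by
      rintro rfl; rw [mul_zero] at hc; exact S3Aux.geomPoly_ne_zero hmpos hc
    have hdegc := Polynomial.natDegree_mul hp0 hc0
    rw [← hc, S3Aux.geomPoly_natDegree hmpos] at hdegc
    have hymem : mk2 m ((X - 1) * c) ∈ LinearMap.ker Φ := by
      rw [hker_mk]
      constructor
      · exact ⟨A2, by rw [hA2, ← S3Aux.geom_mul_eq, hc]; ring⟩
      · exact ⟨B2, by rw [hB2, ← S3Aux.geom_mul_eq, hc]; ring⟩
    have hyc0 : (X - 1) * c ≠ 0 := mul_ne_zero S3Aux.X_sub_one_ne_zero hc0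
    have hydeg : ((X - 1) * c).natDegree = 1 + c.natDegree := by
      rw [Polynomial.natDegree_mul S3Aux.X_sub_one_ne_zero hc0, S3Aux.natDegree_X_sub_one]
    have hy0 : mk2 m ((X - 1) * c) ≠ 0 := by
      rw [Ne, S3Aux.mk2_eq_zero_iff]
      intro hdvd
      have := Polynomial.natDegree_le_of_dvd hdvd hyc0
      rw [S3Aux.fm_natDegree, hydeg] at this
      omega
    have hyg : mk2 m ((X - 1) * c) ≠ mk2 m (geomPoly m) := by
      rw [Ne, S3Aux.mk2_eq_iff]
      intro hdvd
      have hne2 : (X - 1) * c - geomPoly m ≠ 0 := by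
        intro h0
        have heq : (X - 1) * c = geomPoly m := sub_eq_zero.mp h0
        have h5 := congrArg Polynomial.natDegree heq
        rw [hydeg, S3Aux.geomPoly_natDegree hmpos] at h5
        omega
      have hle := Polynomial.natDegree_le_of_dvd hdvd hne2
      rw [S3Aux.fm_natDegree] at hle
      have hsub := Polynomial.natDegree_sub_le ((X - 1) * c) (geomPoly m)
      rw [hydeg, S3Aux.geomPoly_natDegree hmpos] at hsub
      have hsub2 : ((X - 1) * c - geomPoly m).natDegree ≤ m - 1 :=
        hsub.trans (max_le (by omega) le_rfl)
      omega
    have hk2 : 2 ≤ k := by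
      by_contra hcon
      have hk1' : k ≤ 1 := by omega
      have hsub : ({0, mk2 m (geomPoly m), mk2 m ((X - 1) * c)} : Set (R2 m)) ⊆
          (LinearMap.ker Φ : Set (R2 m)) := by
        intro x hx
        simp only [Set.mem_insert_iff, Set.mem_singleton_iff] at hx
        rcases hx with rfl | rfl | rfl
        · exact (LinearMap.ker Φ).zero_mem
        · exact hgker
        · exact hymem
      have hcard3 : ({0, mk2 m (geomPoly m), mk2 m ((X - 1) * c)} : Set (R2 m)).ncard = 3 := by
        rw [Set.ncard_insert_of_notMem (by
          simp only [Set.mem_insert_iff, Set.mem_singleton_iff]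
          push_neg
          exact ⟨Ne.symm hgne, Ne.symm hy0⟩),
          Set.ncard_insert_of_notMem (by
            simp only [Set.mem_singleton_iff]
            exact fun h => hyg h.symm),
          Set.ncard_singleton]
      have hmono := Set.ncard_le_ncard hsub (Set.toFinite _)
      have hkcard : (LinearMap.ker Φ : Set (R2 m)).ncard = 2 ^ k := by
        rw [← Nat.card_coe_set_eq]
        exact S3Aux.card_submodule _
      have hle2 : (2:ℕ) ^ k ≤ 2 ^ 1 := Nat.pow_le_pow_right (by norm_num) hk1'
      omega
    rw [hdim]
    omega


end
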